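/- Let ε* be a C¹ mapping from the symmetric d×d real matrices to themselves with derivative tensor A, and assume: (i) ε*(T)·T ≥ C₁|T| − C₀ and |ε*(T)| ≤ C₂ for all symmetric T, with C₁, C₂ > 0, C₀ ≥ 0; (ii) there is a positive nonincreasing continuous h : [0,∞) → (0,∞) with h(|T|)|B|² ≤ (B,B)_{A(T)} ≤ C₂|B|²/(1+|T|) for all symmetric T, B; (iii) asymptotic Uhlenbeck structure: there is a continuous g : [0,∞) → [0,∞) with g(t) ≤ C₂(1+t) and |g(|T|) ε*(T) − T|² ≤ C₂ (1 + |T|³) h(|T|) for all symmetric T. Then the limit α := lim_{t→∞} t / g(t) exists and satisfies 0 < α < ∞. -/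

import Mathlib

open MeasureTheory Filter Topology Set

noncomputable section

/-- The space of symmetric real `d × d` matrices, as a subspace of `ℝ^{d×d}` with the
Frobenius (Euclidean) inner product. -/
def SymMat (d : ℕ) : Submodule ℝ (EuclideanSpace ℝ (Fin d × Fin d)) where
  carrier := {T | ∀ i j : Fin d, T (i, j) = T (j, i)}
  add_mem' := by
    intro a b ha hb i j
    simp only [PiLp.add_apply, ha i j, hb i j]
  zero_mem' := by intro i j; rfl
  smul_mem' := by
    intro c a ha i j
    simp only [PiLp.smul_apply, ha i j]

set_option maxHeartbeats 2000000 in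
/-- Let `ε*` be a `C¹` mapping of the symmetric `d × d` matrices satisfying the
coercivity and boundedness conditions, uniform `h`-monotonicity with the upper bound
`(B,B)_{A(T)} ≤ C₂|B|²/(1+|T|)`, and the asymptotic Uhlenbeck structure with `g`.
Then `α := lim_{t→∞} t/g(t)` exists and `0 < α < ∞`. -/
theorem uhlenbeck_limit_exists (d : ℕ) (hd : 2 ≤ d)
    (ε : SymMat d → SymMat d) (hε : ContDiff ℝ 1 ε)
    (C₀ C₁ C₂ : ℝ) (hC₀ : 0 ≤ C₀) (hC₁ : 0 < C₁) (hC₂ : 0 < C₂)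
    (hcoer : ∀ T : SymMat d, C₁ * ‖T‖ - C₀ ≤ (inner ℝ (ε T) T : ℝ))
    (hbdd : ∀ T : SymMat d, ‖ε T‖ ≤ C₂)
    (h : ℝ → ℝ)
    (hpos : ∀ s : ℝ, 0 ≤ s → 0 < h s)
    (hanti : AntitoneOn h (Set.Ici 0))
    (hcont : ContinuousOn h (Set.Ici 0))
    (hmon : ∀ T B : SymMat d, h ‖T‖ * ‖B‖ ^ 2 ≤ (inner ℝ (fderiv ℝ ε T B) B : ℝ))
    (hupper : ∀ T B : SymMat d,
      (inner ℝ (fderiv ℝ ε T B) B : ℝ) ≤ C₂ * ‖B‖ ^ 2 / (1 + ‖T‖))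
    (g : ℝ → ℝ)
    (hgcont : ContinuousOn g (Set.Ici 0))
    (hgnonneg : ∀ t : ℝ, 0 ≤ t → 0 ≤ g t)
    (hggrowth : ∀ t : ℝ, 0 ≤ t → g t ≤ C₂ * (1 + t))
    (huhl : ∀ T : SymMat d, ‖g ‖T‖ • ε T - T‖ ^ 2 ≤ C₂ * (1 + ‖T‖ ^ 3) * h ‖T‖) :
    ∃ α : ℝ, 0 < α ∧
      Filter.Tendsto (fun t : ℝ => t / g t) Filter.atTop (nhds α) := by
  have hd0 : 0 < d := by omega
  -- A unit symmetric matrix `E`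
  have hesym : (EuclideanSpace.single ((⟨0, hd0⟩ : Fin d), (⟨0, hd0⟩ : Fin d)) (1:ℝ))
      ∈ SymMat d := by
    intro i j
    simp only [EuclideanSpace.single_apply, Prod.mk.injEq]
    by_cases hi : i = (⟨0, hd0⟩ : Fin d) <;> by_cases hj : j = (⟨0, hd0⟩ : Fin d) <;>
      simp [hi, hj]
  set E : SymMat d := ⟨EuclideanSpace.single (⟨0, hd0⟩, ⟨0, hd0⟩) 1, hesym⟩ with hEdef
  have hEnorm : ‖E‖ = 1 := by
    show ‖EuclideanSpace.single ((⟨0, hd0⟩ : Fin d), (⟨0, hd0⟩ : Fin d)) (1:ℝ)‖ = 1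
    rw [EuclideanSpace.norm_single]; norm_num
  have hεdiff : Differentiable ℝ ε := hε.differentiable one_ne_zero
  -- the key scalar function
  set φ : ℝ → ℝ := fun t => (inner ℝ (ε (t • E)) E : ℝ) with hφdef
  have hder : ∀ t : ℝ,
      HasDerivAt φ (inner ℝ (fderiv ℝ ε (t • E) E) E : ℝ) t := by
    intro t
    have h1 : HasDerivAt (fun s : ℝ => s • E) E t := by
      simpa using (hasDerivAt_id t).smul_const E
    have h3 : HasDerivAt (fun s : ℝ => ε (s • E)) (fderiv ℝ ε (t • E) E) t :=
      (hεdiff (t • E)).hasFDerivAt.comp_hasDerivAt t h1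
    have h4 := h3.inner (𝕜 := ℝ) (hasDerivAt_const t E)
    rw [hφdef]
    simpa only [inner_zero_right, zero_add] using h4
  have hnormsmul : ∀ t : ℝ, ‖t • E‖ = |t| := by
    intro t; rw [norm_smul, hEnorm, Real.norm_eq_abs, mul_one]
  have hderiv_ge : ∀ t : ℝ, h |t| ≤ deriv φ t := by
    intro t
    rw [(hder t).deriv]
    have := hmon (t • E) E
    rwa [hnormsmul, hEnorm, one_pow, mul_one] at this
  have hφdiff : Differentiable ℝ φ := fun t => (hder t).differentiableAt
  have hφmono : Monotone φ := by
    apply monotone_of_deriv_nonneg hφdiff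
    intro t
    exact le_trans (hpos |t| (abs_nonneg t)).le (hderiv_ge t)
  have hφle : ∀ t : ℝ, φ t ≤ C₂ := by
    intro t
    rw [hφdef]
    calc (inner ℝ (ε (t • E)) E : ℝ) ≤ ‖ε (t • E)‖ * ‖E‖ := real_inner_le_norm _ _
    _ = ‖ε (t • E)‖ := by rw [hEnorm, mul_one]
    _ ≤ C₂ := hbdd _
  set L : ℝ := ⨆ t, φ t with hLdef
  have hφtendsto : Tendsto φ atTop (nhds L) :=
    tendsto_atTop_ciSup hφmono ⟨C₂, by rintro x ⟨t, rfl⟩; exact hφle t⟩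
  have hφlower : ∀ t : ℝ, 0 < t → C₁ - C₀ / t ≤ φ t := by
    intro t ht
    have h1 := hcoer (t • E)
    rw [hnormsmul, abs_of_pos ht, real_inner_smul_right (F := SymMat d)] at h1
    rw [← mul_le_mul_iff_of_pos_right ht, sub_mul, div_mul_cancel₀ _ ht.ne']
    have h2 : t * (inner ℝ (ε (t • E)) E : ℝ) = φ t * t := by rw [hφdef]; ring
    rw [h2] at h1
    linarith
  have hLC₁ : C₁ ≤ L := by
    have h0 : Tendsto (fun t : ℝ => C₀ / t) atTop (nhds 0) :=
      tendsto_const_nhds.div_atTop tendsto_id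
    have h1 : Tendsto (fun t : ℝ => C₁ - C₀ / t) atTop (nhds C₁) := by
      simpa using (tendsto_const_nhds (x := C₁) (f := (atTop : Filter ℝ))).sub h0
    refine le_of_tendsto_of_tendsto h1 hφtendsto ?_
    filter_upwards [eventually_gt_atTop (0:ℝ)] with t ht
    exact hφlower t ht
  have hL0 : 0 < L := lt_of_lt_of_le hC₁ hLC₁
  -- mean value inequality
  have hMVT : ∀ a b : ℝ, 0 ≤ a → a ≤ b → (b - a) * h b ≤ φ b - φ a := by
    intro a b ha hab
    set ψ : ℝ → ℝ := fun s => φ s - h b * s with hψdef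
    have hψder : ∀ s : ℝ, HasDerivAt ψ (deriv φ s - h b) s := by
      intro s
      have h5 : HasDerivAt (fun y : ℝ => h b * y) (h b) s := by
        simpa using (hasDerivAt_id s).const_mul (h b)
      have h6 := (hder s).sub h5
      rw [← (hder s).deriv] at h6
      rw [hψdef]
      exact h6
    have hψmono : MonotoneOn ψ (Set.Icc a b) := by
      apply monotoneOn_of_deriv_nonneg (convex_Icc a b)
        (fun x _ => (hψder x).differentiableAt.continuousAt.continuousWithinAt)
        (fun x _ => (hψder x).differentiableAt.differentiableWithinAt)
      intro s hs
      rw [interior_Icc] at hs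
      rw [(hψder s).deriv, sub_nonneg]
      have h0s : 0 ≤ s := le_trans ha hs.1.le
      have h7 : h s ≤ deriv φ s := by
        have := hderiv_ge s; rwa [abs_of_nonneg h0s] at this
      exact le_trans (hanti (mem_Ici.2 h0s) (mem_Ici.2 (h0s.trans hs.2.le)) hs.2.le) h7
    have h9 := hψmono (Set.left_mem_Icc.2 hab) (Set.right_mem_Icc.2 hab) hab
    simp only [hψdef] at h9
    ring_nf at h9 ⊢
    linarith
  -- t * h t → 0
  have hth : Tendsto (fun t : ℝ => t * h t) atTop (nhds 0) := by
    have hhalf : Tendsto (fun t : ℝ => φ t - φ (t / 2)) atTop (nhds 0) := by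
      have hh : Tendsto (fun t : ℝ => t / 2) atTop atTop :=
        tendsto_id.atTop_div_const (by norm_num)
      simpa using hφtendsto.sub (hφtendsto.comp hh)
    apply squeeze_zero' (f := fun t : ℝ => t * h t)
      (g := fun t : ℝ => 2 * (φ t - φ (t / 2)))
    · filter_upwards [eventually_ge_atTop (0:ℝ)] with t ht
      exact mul_nonneg ht (hpos t ht).le
    · filter_upwards [eventually_ge_atTop (0:ℝ)] with t ht
      have h10 := hMVT (t / 2) t (by linarith) (by linarith)
      ring_nf at h10 ⊢
      linarith
    · simpa using hhalf.const_mul 2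
  -- the remainder bound
  have hrb : ∀ t : ℝ, 0 ≤ t → (g t * φ t - t) ^ 2 ≤ C₂ * (1 + t ^ 3) * h t := by
    intro t ht
    have hT : ‖t • E‖ = t := by rw [hnormsmul, abs_of_nonneg ht]
    have h1 := huhl (t • E)
    rw [hT] at h1
    have h2 : g t * φ t - t = (inner ℝ (g t • ε (t • E) - t • E) E : ℝ) := by
      rw [inner_sub_left, real_inner_smul_left (F := SymMat d), real_inner_smul_left (F := SymMat d),
        real_inner_self_eq_norm_sq, hEnorm, hφdef]
      ring
    have h3 : |g t * φ t - t| ≤ ‖g t • ε (t • E) - t • E‖ := by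
      rw [h2]
      calc |(inner ℝ (g t • ε (t • E) - t • E) E : ℝ)|
          ≤ ‖g t • ε (t • E) - t • E‖ * ‖E‖ := abs_real_inner_le_norm _ _
        _ = _ := by rw [hEnorm, mul_one]
    calc (g t * φ t - t) ^ 2 = |g t * φ t - t| ^ 2 := (sq_abs _).symm
      _ ≤ ‖g t • ε (t • E) - t • E‖ ^ 2 := pow_le_pow_left₀ (abs_nonneg _) h3 2
      _ ≤ C₂ * (1 + t ^ 3) * h t := h1
  -- (g t * φ t - t)/t → 0
  have hrt : Tendsto (fun t : ℝ => (g t * φ t - t) / t) atTop (nhds 0) := by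
    have hw : Tendsto (fun t : ℝ => C₂ * (h 0 / t ^ 2 + t * h t)) atTop (nhds 0) := by
      have h1 : Tendsto (fun t : ℝ => h 0 / t ^ 2) atTop (nhds 0) :=
        tendsto_const_nhds.div_atTop (tendsto_pow_atTop two_ne_zero)
      simpa using (h1.add hth).const_mul C₂
    have hw' : Tendsto (fun t : ℝ => Real.sqrt (C₂ * (h 0 / t ^ 2 + t * h t))) atTop
        (nhds 0) := by simpa using hw.sqrt
    apply squeeze_zero_norm' _ hw'
    filter_upwards [eventually_ge_atTop (1:ℝ)] with t ht
    have ht0 : (0:ℝ) < t := by linarith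
    have ht2 : (0:ℝ) < t ^ 2 := by positivity
    rw [Real.norm_eq_abs]
    apply Real.abs_le_sqrt
    rw [div_pow, div_le_iff₀ ht2]
    have h1 := hrb t ht0.le
    have h2 : h t ≤ h 0 := hanti (mem_Ici.2 le_rfl) (mem_Ici.2 ht0.le) ht0.le
    calc (g t * φ t - t) ^ 2 ≤ C₂ * (1 + t ^ 3) * h t := h1
      _ = C₂ * (h t + t ^ 3 * h t) := by ring
      _ ≤ C₂ * (h 0 + t ^ 3 * h t) := by
          apply mul_le_mul_of_nonneg_left _ hC₂.le
          linarith
      _ = C₂ * (h 0 / t ^ 2 + t * h t) * t ^ 2 := by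
          rw [mul_assoc, add_mul, div_mul_cancel₀ _ ht2.ne']
          ring
  -- eventually φ t > L/2 > 0
  have hφpos : ∀ᶠ t : ℝ in atTop, L / 2 < φ t :=
    hφtendsto.eventually (eventually_gt_nhds (by linarith))
  -- g t / t → L⁻¹
  have hkey : Tendsto (fun t : ℝ => g t / t) atTop (nhds L⁻¹) := by
    have h1 : Tendsto (fun t : ℝ => (1 + (g t * φ t - t) / t) / φ t) atTop
        (nhds L⁻¹) := by
      have h2 := ((tendsto_const_nhds (x := (1:ℝ)) (f := (atTop : Filter ℝ))).add
        hrt).div hφtendsto hL0.ne'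
      simpa [Pi.div_def] using h2
    apply h1.congr'
    filter_upwards [hφpos, eventually_gt_atTop (0:ℝ)] with t hφt ht
    have hφt0 : φ t ≠ 0 := (lt_trans (half_pos hL0) hφt).ne'
    field_simp
    ring
  refine ⟨L, hL0, ?_⟩
  have h2 : Tendsto (fun t : ℝ => (g t / t)⁻¹) atTop (nhds (L⁻¹)⁻¹) :=
    hkey.inv₀ (by positivity)
  rw [inv_inv] at h2
  apply h2.congr
  intro t
  rw [inv_div]
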